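/- The function x ↦ F(x) := f_0(β,x) - μx + (a/2)x² has a unique stationary point x̃₁(μ) on (0,∞), which is its unique global minimizer; x̃₁(μ) is characterized by s_β(x̃₁(μ)) = μ - a x̃₁(μ), and μ ↦ x̃₁(μ) is non-decreasing. -/

import Mathlib

open Real Set Filter

/-- `F(x) = f₀(β,x) - μx + (a/2)x²` has a unique stationary point `x̃₁(μ)` on
`(0,∞)` — characterized by `s_β(x̃₁(μ)) = μ - a·x̃₁(μ)` — which is the unique
global minimizer of `F` on `(0,∞)`; moreover `μ ↦ x̃₁(μ)` is non-decreasing. -/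
theorem stmt_11 (d : ℕ) (hd : 3 ≤ d) (β a : ℝ) (hβ : 0 < β) (ha : 0 < a)
    (ρc : ℝ) (hρc : 0 < ρc)
    (f₀ sβ : ℝ → ℝ)
    (hconv : ConvexOn ℝ (Ioi 0) f₀)
    (hderiv : ∀ x : ℝ, 0 < x → HasDerivAt f₀ (sβ x) x)
    (hmono : MonotoneOn sβ (Ioi 0))
    (hcont : ContinuousOn sβ (Ioi 0))
    (hstrict : StrictMonoOn sβ (Ioc 0 ρc))
    (hzero : ∀ x : ℝ, ρc ≤ x → sβ x = 0)
    (hbot : Tendsto sβ (nhdsWithin 0 (Ioi 0)) atBot) :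
    (∀ μ : ℝ, ∃! x : ℝ, 0 < x ∧ sβ x = μ - a * x) ∧
    (∀ x₁ : ℝ → ℝ,
      (∀ μ : ℝ, 0 < x₁ μ ∧ sβ (x₁ μ) = μ - a * x₁ μ) →
      (∀ μ : ℝ, ∀ x : ℝ, 0 < x → x ≠ x₁ μ →
          f₀ (x₁ μ) - μ * x₁ μ + a / 2 * (x₁ μ) ^ 2 < f₀ x - μ * x + a / 2 * x ^ 2) ∧
        Monotone x₁) := by
  set g : ℝ → ℝ := fun x => sβ x + a * x with hg_def
  have hg_strict : StrictMonoOn g (Ioi 0) := by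
    intro x hx y hy hxy
    have h1 : sβ x ≤ sβ y := hmono hx hy hxy.le
    have h2 : a * x < a * y := by nlinarith
    simp only [hg_def]; linarith
  have hg_cont : ContinuousOn g (Ioi 0) :=
    hcont.add (continuous_const.mul continuous_id).continuousOn
  -- existence/uniqueness of solution to g x = μ
  have hexun : ∀ μ : ℝ, ∃! x : ℝ, 0 < x ∧ sβ x = μ - a * x := by
    intro μ
    set xhi : ℝ := max ρc (|μ| / a + 1) with hxhi_def
    have hxhi_pos : 0 < xhi := lt_of_lt_of_le hρc (le_max_left _ _)
    have hg_hi : μ < g xhi := by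
      have h0 : sβ xhi = 0 := hzero _ (le_max_left _ _)
      have h1 : |μ| / a + 1 ≤ xhi := le_max_right _ _
      have h2 : μ ≤ |μ| := le_abs_self μ
      have h3 : a * (|μ| / a + 1) ≤ a * xhi := by nlinarith
      have h4 : a * (|μ| / a + 1) = |μ| + a := by field_simp
      simp only [hg_def, h0, zero_add]
      linarith
    -- find small point where g < μ
    have hev1 : ∀ᶠ x in nhdsWithin 0 (Ioi 0), sβ x < μ - a * xhi :=
      hbot.eventually (eventually_lt_atBot (μ - a * xhi))
    have hev2 : ∀ᶠ x in nhdsWithin 0 (Ioi 0), x < xhi :=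
      eventually_nhdsWithin_of_eventually_nhds
        (Filter.Tendsto.eventually_lt_const hxhi_pos tendsto_id)
    have hev3 : ∀ᶠ x in nhdsWithin 0 (Ioi 0), x ∈ Ioi (0:ℝ) :=
      eventually_mem_nhdsWithin
    obtain ⟨xlo, h1, h3⟩ := ((hev1.and hev2).and hev3).exists
    have hxlo_pos : 0 < xlo := h3
    have hg_lo : g xlo < μ := by
      have : a * xlo < a * xhi := by nlinarith [h1.2]
      simp only [hg_def]; linarith [h1.1]
    have hsub : Icc xlo xhi ⊆ Ioi (0:ℝ) := fun y hy => lt_of_lt_of_le hxlo_pos hy.1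
    have hIVT := intermediate_value_Icc (le_of_lt h1.2) (hg_cont.mono hsub)
    have hμ : μ ∈ Icc (g xlo) (g xhi) := ⟨hg_lo.le, hg_hi.le⟩
    obtain ⟨c, hc, hgc⟩ := hIVT hμ
    have hc_pos : 0 < c := hsub hc
    refine ⟨c, ⟨hc_pos, by simp only [hg_def] at hgc; linarith⟩, ?_⟩
    rintro y ⟨hy_pos, hy_eq⟩
    have hgy : g y = μ := by simp only [hg_def]; linarith
    exact hg_strict.injOn hy_pos hc_pos (by rw [hgy, hgc])
  refine ⟨hexun, ?_⟩
  intro x₁ hx₁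
  constructor
  · intro μ x hx hne
    set c := x₁ μ with hc_def
    obtain ⟨hc_pos, hc_eq⟩ := hx₁ μ
    set F : ℝ → ℝ := fun x => f₀ x - μ * x + a / 2 * x ^ 2 with hF_def
    have hF_deriv : ∀ y : ℝ, 0 < y → HasDerivAt F (g y - μ) y := by
      intro y hy
      have h1 : HasDerivAt (fun x : ℝ => μ * x) μ y := by
        simpa using (hasDerivAt_id y).const_mul μ
      have h2 : HasDerivAt (fun x : ℝ => a / 2 * x ^ 2) (a * y) y := by
        have := (hasDerivAt_pow 2 y).const_mul (a / 2)
        refine this.congr_deriv ?_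
        push_cast; ring
      have := ((hderiv y hy).sub h1).add h2
      refine this.congr_deriv ?_
      simp only [hg_def]; ring
    have hF_diff : ∀ y : ℝ, 0 < y → DifferentiableAt ℝ F y :=
      fun y hy => (hF_deriv y hy).differentiableAt
    have hderiv_eq : ∀ y : ℝ, 0 < y → deriv F y = g y - μ :=
      fun y hy => (hF_deriv y hy).deriv
    have hgc : g c = μ := by simp only [hg_def]; linarith
    rcases lt_or_gt_of_ne hne with hlt | hgt
    · -- x < c : F strictly decreasing on Ioc 0 c
      have hanti : StrictAntiOn F (Ioc 0 c) := by
        apply strictAntiOn_of_deriv_neg (convex_Ioc 0 c)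
        · exact fun y hy => (hF_diff y hy.1).continuousAt.continuousWithinAt
        · intro y hy
          rw [interior_Ioc] at hy
          rw [hderiv_eq y hy.1]
          have : g y < g c := hg_strict hy.1 hc_pos hy.2
          linarith [hgc ▸ this]
      have := hanti ⟨hx, hlt.le⟩ ⟨hc_pos, le_refl c⟩ hlt
      exact this
    · -- c < x : F strictly increasing on Ici c
      have hmono' : StrictMonoOn F (Ici c) := by
        apply strictMonoOn_of_deriv_pos (convex_Ici c)
        · exact fun y hy => (hF_diff y (lt_of_lt_of_le hc_pos hy)).continuousAt.continuousWithinAt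
        · intro y hy
          rw [interior_Ici] at hy
          rw [hderiv_eq y (hc_pos.trans hy)]
          have : g c < g y := hg_strict hc_pos (hc_pos.trans hy) hy
          linarith [hgc ▸ this]
      exact hmono' (le_refl c) hgt.le hgt
  · intro μ μ' hμμ'
    obtain ⟨h1, e1⟩ := hx₁ μ
    obtain ⟨h2, e2⟩ := hx₁ μ'
    by_contra hcon
    push_neg at hcon
    have : g (x₁ μ') < g (x₁ μ) := hg_strict h2 h1 hcon
    simp only [hg_def] at this
    linarith
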